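/- Let M and N be finite-dimensional smooth real manifolds without boundary, Hausdorff and second countable (hence σ-compact). Then the functions on M × N of split form are cofinal in C^∞(M × N) for the pointwise order: for every smooth function f : M × N → ℝ there exist smooth functions f₁ : M → ℝ and f₂ : N → ℝ such that f(x, y) ≤ f₁(x) + f₂(y) for all (x, y) ∈ M × N. -/

import Mathlib

open scoped Manifold
open Set

/-- Let `M` and `N` be finite-dimensional smooth real manifolds without
boundary (Hausdorff and second countable). Then split functions are cofinal among smooth
functions on `M × N`: for every smooth `f : M × N → ℝ` there are smooth `f₁ : M → ℝ` and
`f₂ : N → ℝ` with `f (x, y) ≤ f₁ x + f₂ y` for all `x, y`. -/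
theorem split_functions_cofinal
    {m n : ℕ}
    {M : Type*} [TopologicalSpace M] [ChartedSpace (EuclideanSpace ℝ (Fin m)) M]
    [IsManifold (𝓡 m) (⊤ : ℕ∞) M] [T2Space M] [SecondCountableTopology M]
    {N : Type*} [TopologicalSpace N] [ChartedSpace (EuclideanSpace ℝ (Fin n)) N]
    [IsManifold (𝓡 n) (⊤ : ℕ∞) N] [T2Space N] [SecondCountableTopology N]
    (f : M × N → ℝ) (hf : ContMDiff ((𝓡 m).prod (𝓡 n)) 𝓘(ℝ, ℝ) (⊤ : ℕ∞) f) :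
    ∃ (f₁ : M → ℝ) (f₂ : N → ℝ),
      ContMDiff (𝓡 m) 𝓘(ℝ, ℝ) (⊤ : ℕ∞) f₁ ∧ ContMDiff (𝓡 n) 𝓘(ℝ, ℝ) (⊤ : ℕ∞) f₂ ∧
      ∀ (x : M) (y : N), f (x, y) ≤ f₁ x + f₂ y := by
  haveI : LocallyCompactSpace M :=
    ChartedSpace.locallyCompactSpace (EuclideanSpace ℝ (Fin m)) M
  haveI : LocallyCompactSpace N :=
    ChartedSpace.locallyCompactSpace (EuclideanSpace ℝ (Fin n)) N
  haveI : SigmaCompactSpace M := inferInstance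
  haveI : SigmaCompactSpace N := inferInstance
  set K := CompactExhaustion.choice M with hK
  set L := CompactExhaustion.choice N with hL
  set c : ℕ → ℝ := fun i => sSup (f '' (K i ×ˢ L i)) with hc
  set d : ℕ → ℝ := fun i => max (c i) 0 with hd
  have hbdd : ∀ i, BddAbove (f '' (K i ×ˢ L i)) := fun i =>
    (((K.isCompact i).prod (L.isCompact i)).image hf.continuous).bddAbove
  have hdmono : Monotone d := by
    intro i j hij
    rcases (K i ×ˢ L i).eq_empty_or_nonempty with h | h
    · simp [hd, hc, h, Real.sSup_empty]
    · have hci : c i ≤ c j := by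
        refine csSup_le_csSup (hbdd j) (h.image f) (image_mono (f := f) ?_)
        exact prod_mono (K.subset hij) (L.subset hij)
      exact max_le_max hci le_rfl
  have hdnonneg : ∀ i, 0 ≤ d i := fun i => le_max_right _ _
  have key : ∀ (x : M) (y : N), f (x, y) ≤ d (K.find x) + d (L.find y) := by
    intro x y
    have hmem : (x, y) ∈ K (max (K.find x) (L.find y)) ×ˢ L (max (K.find x) (L.find y)) :=
      ⟨K.subset (le_max_left _ _) (K.mem_find x), L.subset (le_max_right _ _) (L.mem_find y)⟩
    have h1 : f (x, y) ≤ c (max (K.find x) (L.find y)) :=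
      le_csSup (hbdd _) (mem_image_of_mem f hmem)
    have h2 : c (max (K.find x) (L.find y)) ≤ d (max (K.find x) (L.find y)) :=
      le_max_left _ _
    have h3 : d (max (K.find x) (L.find y)) ≤ d (K.find x) + d (L.find y) := by
      rcases le_total (K.find x) (L.find y) with h | h
      · rw [max_eq_right h]
        linarith [hdnonneg (K.find x)]
      · rw [max_eq_left h]
        linarith [hdnonneg (L.find y)]
    linarith
  obtain ⟨g₁, hg₁⟩ := exists_contMDiffMap_forall_mem_convex_of_local (𝓡 m) (n := (⊤ : ℕ∞))
    (t := fun x : M => Ici (d (K.find x))) (fun x => convex_Ici _) (fun x => by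
      refine ⟨interior (K (K.find x + 1)),
        isOpen_interior.mem_nhds (K.subset_interior_succ _ (K.mem_find x)),
        fun _ => d (K.find x + 1), contMDiffOn_const, fun y hy => ?_⟩
      have : K.find y ≤ K.find x + 1 := K.mem_iff_find_le.1 (interior_subset hy)
      exact hdmono this)
  obtain ⟨g₂, hg₂⟩ := exists_contMDiffMap_forall_mem_convex_of_local (𝓡 n) (n := (⊤ : ℕ∞))
    (t := fun y : N => Ici (d (L.find y))) (fun y => convex_Ici _) (fun y => by
      refine ⟨interior (L (L.find y + 1)),
        isOpen_interior.mem_nhds (L.subset_interior_succ _ (L.mem_find y)),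
        fun _ => d (L.find y + 1), contMDiffOn_const, fun z hz => ?_⟩
      have : L.find z ≤ L.find y + 1 := L.mem_iff_find_le.1 (interior_subset hz)
      exact hdmono this)
  refine ⟨g₁, g₂, g₁.contMDiff, g₂.contMDiff, fun x y => ?_⟩
  exact (key x y).trans (add_le_add (hg₁ x) (hg₂ y))
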